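/- Let G be a countable oriented graph and G₀ ⊆ G₁ ⊆ ⋯ a nondecreasing sequence of finite subgraphs such that every vertex and every edge of G belongs to G_n for all sufficiently large n. Then the Gurevich entropies satisfy lim_{n→∞} h_top(G_n) = h_top(G). -/

import Mathlib

open Filter
open scoped ENNReal

variable {V : Type*}

/-- The number (in `ℕ∞`) of loops of length `n` based at `v` in the oriented graph with
edge relation `E`. -/
noncomputable def loopCount (E : V → V → Prop) (v : V) (n : ℕ) : ℕ∞ :=
  Set.encard {f : Fin (n + 1) → V |
    f 0 = v ∧ f (Fin.last n) = v ∧ ∀ k : Fin n, E (f k.castSucc) (f k.succ)}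

/-- The Gurevich entropy of a countable oriented graph: the supremum over vertices of the
exponential growth rate of the number of loops based at that vertex. -/
noncomputable def gurevichEntropy (E : V → V → Prop) : EReal :=
  ⨆ v : V, Filter.limsup
    (fun n : ℕ => (((n : ℝ)⁻¹ : ℝ) : EReal) * ENNReal.log ((loopCount E v n : ℝ≥0∞))) atTop

/-- auxiliary: if there is an injection of `s ×ˢ t` into `u`, then
`s.encard * t.encard ≤ u.encard`. -/
private lemma encard_mul_le_of_injOn {α β γ : Type*} {s : Set α} {t : Set β} {u : Set γ}
    (φ : α × β → γ) (hmap : Set.MapsTo φ (s ×ˢ t) u) (hinj : Set.InjOn φ (s ×ˢ t)) :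
    s.encard * t.encard ≤ u.encard := by
  have h1 : (s ×ˢ t).encard = s.encard * t.encard := by
    simp only [Set.encard, ENat.card]
    rw [Cardinal.mk_congr (Equiv.Set.prod s t), Cardinal.mk_prod, map_mul]
    congr 1 <;> exact Cardinal.toENat_lift
  rw [← h1, ← hinj.encard_image]
  exact Set.encard_le_encard hmap.image_subset

/-- concatenation of two loops -/
private def concatMap (a b : ℕ) (p : (Fin (a + 1) → V) × (Fin (b + 1) → V))
    (i : Fin (a + b + 1)) : V :=
  if h : (i : ℕ) < a + 1 then p.1 ⟨i, h⟩ else p.2 ⟨(i : ℕ) - a, by omega⟩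

private lemma concatMap_lt {a b : ℕ} (p : (Fin (a + 1) → V) × (Fin (b + 1) → V))
    (i : Fin (a + b + 1)) (h : (i : ℕ) < a + 1) : concatMap a b p i = p.1 ⟨i, h⟩ :=
  dif_pos h

private lemma concatMap_ge {a b : ℕ} (p : (Fin (a + 1) → V) × (Fin (b + 1) → V))
    (i : Fin (a + b + 1)) (h : ¬ (i : ℕ) < a + 1) :
    concatMap a b p i = p.2 ⟨(i : ℕ) - a, by omega⟩ :=
  dif_neg h

private lemma loopCount_mul_le (E : V → V → Prop) (v : V) (a b : ℕ) :
    loopCount E v a * loopCount E v b ≤ loopCount E v (a + b) := by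
  classical
  apply encard_mul_le_of_injOn (concatMap a b)
  · rintro ⟨f, g⟩ ⟨⟨hf0, hfl, hfe⟩, hg0, hgl, hge⟩
    dsimp only at hf0 hfl hfe hg0 hgl hge
    refine ⟨?_, ?_, ?_⟩
    · show concatMap a b (f, g) 0 = v
      rw [concatMap_lt _ _ (by simp)]
      convert hf0 using 2 <;> (ext; simp)
    · show concatMap a b (f, g) (Fin.last (a + b)) = v
      by_cases hb : b = 0
      · subst hb
        rw [concatMap_lt _ _ (by simp [Fin.last])]
        convert hfl using 2 <;> (ext; simp [Fin.last])
      · rw [concatMap_ge _ _ (by simp [Fin.last]; omega)]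
        convert hgl using 2 <;> (ext; simp [Fin.last]) <;> omega
    · intro k
      show E (concatMap a b (f, g) k.castSucc) (concatMap a b (f, g) k.succ)
      by_cases h1 : (k : ℕ) + 1 < a + 1
      · rw [concatMap_lt _ _ (by simp; omega), concatMap_lt _ _ (by simp; omega)]
        have := hfe ⟨(k : ℕ), by omega⟩
        convert this using 2 <;> (try ext) <;> (try simp)
      · by_cases h2 : (k : ℕ) < a + 1
        · have hk : (k : ℕ) = a := by omega
          have hbpos : 0 < b := by have := k.isLt; omega
          rw [concatMap_lt _ _ (by simp; omega), concatMap_ge _ _ (by simp; omega)]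
          have hv1 : f ⟨((k.castSucc : Fin (a + b + 1)) : ℕ), by simp; omega⟩ = v := by
            convert hfl using 2
            ext
            simp [Fin.last, hk]
          have := hge ⟨0, hbpos⟩
          rw [show ((⟨0, hbpos⟩ : Fin b).castSucc) = (0 : Fin (b + 1)) from by ext; simp] at this
          rw [hg0] at this
          dsimp only
          rw [hv1]
          convert this using 2 <;> (try ext) <;> (try simp) <;> omega
        · rw [concatMap_ge _ _ (by simpa using h2), concatMap_ge _ _ (by simp; omega)]
          have hlt : (k : ℕ) - a < b := by have := k.isLt; omega
          have := hge ⟨(k : ℕ) - a, hlt⟩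
          convert this using 2 <;> (try ext) <;> (try simp) <;> omega
  · rintro ⟨f, g⟩ ⟨⟨hf0, hfl, hfe⟩, hg0, hgl, hge⟩ ⟨f', g'⟩ ⟨⟨hf0', hfl', hfe'⟩, hg0', hgl', hge'⟩
      heq
    dsimp only at hf0 hfl hfe hg0 hgl hge hf0' hfl' hfe' hg0' hgl' hge'
    have heq' : ∀ i : Fin (a + b + 1), concatMap a b (f, g) i = concatMap a b (f', g') i :=
      fun i => congrFun heq i
    refine Prod.ext ?_ ?_
    · show f = f'
      funext i
      have := heq' ⟨(i : ℕ), by omega⟩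
      rw [concatMap_lt _ _ (by simpa using i.isLt), concatMap_lt _ _ (by simpa using i.isLt)]
        at this
      convert this using 2 <;> (try ext) <;> (try simp)
    · show g = g'
      funext j
      by_cases hj0 : (j : ℕ) = 0
      · have hj : j = 0 := by ext; simpa using hj0
        rw [hj, hg0, hg0']
      · have := heq' ⟨a + (j : ℕ), by have := j.isLt; omega⟩
        rw [concatMap_ge _ _ (by show ¬ (a + (j : ℕ) < a + 1); omega),
          concatMap_ge _ _ (by show ¬ (a + (j : ℕ) < a + 1); omega)] at this
        convert this using 2 <;> (try ext) <;> (try simp) <;> omega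

private lemma one_le_loopCount_zero (E : V → V → Prop) (v : V) : 1 ≤ loopCount E v 0 := by
  rw [loopCount, Set.one_le_encard_iff_nonempty]
  exact ⟨fun _ => v, rfl, rfl, fun k => k.elim0⟩

private lemma pow_le_loopCount (E : V → V → Prop) (v : V) (m k : ℕ) :
    loopCount E v m ^ k ≤ loopCount E v (k * m) := by
  induction k with
  | zero => simpa using one_le_loopCount_zero E v
  | succ k ih =>
      calc loopCount E v m ^ (k + 1) = loopCount E v m ^ k * loopCount E v m := pow_succ _ _
        _ ≤ loopCount E v (k * m) * loopCount E v m := mul_le_mul_left ih _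
        _ ≤ loopCount E v (k * m + m) := loopCount_mul_le E v _ _
        _ = loopCount E v ((k + 1) * m) := by rw [Nat.succ_mul]

private lemma loopCount_mono {E E' : V → V → Prop} (h : ∀ a b, E a b → E' a b) (v : V) (n : ℕ) :
    loopCount E v n ≤ loopCount E' v n :=
  Set.encard_le_encard fun f hf => ⟨hf.1, hf.2.1, fun k => h _ _ (hf.2.2 k)⟩

private lemma log_natCast_eq (c : ℕ) (hc : c ≠ 0) :
    ENNReal.log ((c : ℝ≥0∞)) = ((Real.log c : ℝ) : EReal) := by
  rw [show ((c : ℕ) : ℝ≥0∞) = ENNReal.ofReal (c : ℝ) from by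
        rw [ENNReal.ofReal_natCast],
    ENNReal.log_ofReal_of_pos (by positivity)]

private lemma gurevichEntropy_mono {E E' : V → V → Prop} (h : ∀ a b, E a b → E' a b) :
    gurevichEntropy E ≤ gurevichEntropy E' := by
  refine iSup_mono fun v => Filter.limsup_le_limsup
    (Filter.Eventually.of_forall fun n => ?_) (by isBoundedDefault) (by isBoundedDefault)
  apply mul_le_mul_of_nonneg_left
  · exact ENNReal.log_monotone (ENat.toENNReal_le.2 (loopCount_mono h v n))
  · exact EReal.coe_nonneg.2 (inv_nonneg.2 (Nat.cast_nonneg n))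

/-- Key growth lemma: if there are at least `c` loops of length `m` based at `v`, then the
limsup entropy at `v` is at least `m⁻¹ * log c`. -/
private lemma le_limsup_aux (E : V → V → Prop) (v : V) {m : ℕ} (hm : 0 < m) (c : ℕ)
    (hc : (c : ℕ∞) ≤ loopCount E v m) :
    (((m : ℝ)⁻¹ : ℝ) : EReal) * ENNReal.log (((c : ℕ∞) : ℝ≥0∞)) ≤
      Filter.limsup
        (fun n : ℕ => (((n : ℝ)⁻¹ : ℝ) : EReal) * ENNReal.log ((loopCount E v n : ℝ≥0∞)))
        atTop := by
  rcases Nat.eq_zero_or_pos c with rfl | hc1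
  · rw [Nat.cast_zero, ENat.toENNReal_zero, ENNReal.log_zero,
      EReal.coe_mul_bot_of_pos (by positivity)]
    exact bot_le
  · refine Filter.le_limsup_of_frequently_le ?_ (by isBoundedDefault)
    rw [Filter.frequently_atTop]
    intro N
    refine ⟨(N + 1) * m, ?_, ?_⟩
    · calc N ≤ N + 1 := Nat.le_succ N
        _ = (N + 1) * 1 := (mul_one _).symm
        _ ≤ (N + 1) * m := Nat.mul_le_mul_left _ hm
    · set k := N + 1 with hk
      have hkpos : 0 < k := Nat.succ_pos N
      have hpow : ((c : ℕ∞)) ^ k ≤ loopCount E v (k * m) :=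
        le_trans (pow_le_pow_left' hc k) (pow_le_loopCount E v m k)
      have hcast : ((c : ℝ≥0∞)) ^ k ≤ ((loopCount E v (k * m) : ℝ≥0∞)) := by
        have h' := ENat.toENNReal_le.2 hpow
        rw [ENat.toENNReal_pow] at h'
        simpa using h'
      have h1 : ((k : ℕ) : EReal) * ENNReal.log ((c : ℝ≥0∞)) ≤
          ENNReal.log ((loopCount E v (k * m) : ℝ≥0∞)) := by
        rw [← ENNReal.log_pow]
        exact ENNReal.log_monotone hcast
      have h2 : ((((k * m : ℕ) : ℝ)⁻¹ : ℝ) : EReal) * (((k : ℕ) : EReal) *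
          ENNReal.log ((c : ℝ≥0∞))) ≤
          ((((k * m : ℕ) : ℝ)⁻¹ : ℝ) : EReal) *
            ENNReal.log ((loopCount E v (k * m) : ℝ≥0∞)) :=
        mul_le_mul_of_nonneg_left h1 (EReal.coe_nonneg.2 (inv_nonneg.2 (Nat.cast_nonneg _)))
      refine le_trans (le_of_eq ?_) h2
      rw [ENat.toENNReal_coe, log_natCast_eq c hc1.ne']
      rw [show ((k : ℕ) : EReal) = (((k : ℝ) : ℝ) : EReal) from by
            rw [EReal.coe_coe_eq_natCast]]
      rw [← EReal.coe_mul, ← EReal.coe_mul, ← EReal.coe_mul]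
      congr 1
      have hmr : (m : ℝ) ≠ 0 := Nat.cast_ne_zero.2 hm.ne'
      have hkr : (k : ℝ) ≠ 0 := Nat.cast_ne_zero.2 hkpos.ne'
      rw [Nat.cast_mul]
      field_simp

theorem gurevichEntropy_tendsto_of_exhaustion [Countable V]
    (E : V → V → Prop) (Vseq : ℕ → Set V) (Eseq : ℕ → V → V → Prop)
    (hVfin : ∀ n, (Vseq n).Finite) (hVmono : ∀ n, Vseq n ⊆ Vseq (n + 1))
    (hEmono : ∀ n a b, Eseq n a b → Eseq (n + 1) a b)
    (hEsub : ∀ n a b, Eseq n a b → E a b)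
    (hEin : ∀ n a b, Eseq n a b → a ∈ Vseq n ∧ b ∈ Vseq n)
    (hVexh : ∀ a : V, ∃ N, ∀ n ≥ N, a ∈ Vseq n)
    (hEexh : ∀ a b, E a b → ∃ N, ∀ n ≥ N, Eseq n a b) :
    Tendsto (fun n => gurevichEntropy (Eseq n)) atTop (nhds (gurevichEntropy E)) := by
  have hmono : Monotone fun n => gurevichEntropy (Eseq n) :=
    monotone_nat_of_le_succ fun n => gurevichEntropy_mono (hEmono n)
  have hle : ∀ n, gurevichEntropy (Eseq n) ≤ gurevichEntropy E :=
    fun n => gurevichEntropy_mono (hEsub n)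
  have hsup : (⨆ n, gurevichEntropy (Eseq n)) = gurevichEntropy E := by
    refine le_antisymm (iSup_le hle) ?_
    set R := ⨆ n, gurevichEntropy (Eseq n) with hR
    rw [gurevichEntropy]
    refine iSup_le fun v => ?_
    refine Filter.limsup_le_of_le (by isBoundedDefault) ?_
    filter_upwards [Filter.eventually_ge_atTop 1] with m hm1
    have hm : 0 < m := hm1
    -- The main claim: any finite number of loops is eventually realized in some `Eseq N`.
    have claim : ∀ c : ℕ, (c : ℕ∞) ≤ loopCount E v m →
        (((m : ℝ)⁻¹ : ℝ) : EReal) * ENNReal.log (((c : ℕ∞) : ℝ≥0∞)) ≤ R := by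
      intro c hc
      obtain ⟨T, hTsub, hTcard⟩ := Set.exists_subset_encard_eq hc
      have hTfin : T.Finite := Set.finite_of_encard_eq_coe hTcard
      have hev : ∀ᶠ N in atTop, ∀ f ∈ T, ∀ k : Fin m, Eseq N (f k.castSucc) (f k.succ) := by
        rw [Filter.eventually_all_finite hTfin]
        intro f hf
        rw [eventually_all]
        intro k
        obtain ⟨N, hN⟩ := hEexh _ _ ((hTsub hf).2.2 k)
        exact Filter.eventually_atTop.2 ⟨N, hN⟩
      obtain ⟨N, hN⟩ := hev.exists
      have hsubN : T ⊆ {f : Fin (m + 1) → V | f 0 = v ∧ f (Fin.last m) = v ∧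
          ∀ k : Fin m, Eseq N (f k.castSucc) (f k.succ)} :=
        fun f hf => ⟨(hTsub hf).1, (hTsub hf).2.1, hN f hf⟩
      have hcN : (c : ℕ∞) ≤ loopCount (Eseq N) v m := hTcard ▸ Set.encard_le_encard hsubN
      calc (((m : ℝ)⁻¹ : ℝ) : EReal) * ENNReal.log (((c : ℕ∞) : ℝ≥0∞))
          ≤ Filter.limsup (fun n : ℕ =>
              (((n : ℝ)⁻¹ : ℝ) : EReal) *
                ENNReal.log ((loopCount (Eseq N) v n : ℝ≥0∞))) atTop :=
            le_limsup_aux (Eseq N) v hm c hcN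
        _ ≤ gurevichEntropy (Eseq N) :=
            le_iSup (fun w : V => Filter.limsup (fun n : ℕ =>
              (((n : ℝ)⁻¹ : ℝ) : EReal) *
                ENNReal.log ((loopCount (Eseq N) w n : ℝ≥0∞))) atTop) v
        _ ≤ R := by
            rw [hR]
            exact le_iSup (fun n => gurevichEntropy (Eseq n)) N
    by_cases htop : loopCount E v m = ⊤
    · have hRtop : R = ⊤ := by
        rw [EReal.eq_top_iff_forall_lt]
        intro y
        set c : ℕ := ⌈Real.exp ((m : ℝ) * (y + 1))⌉₊ + 1 with hcdef
        have hcne : c ≠ 0 := Nat.succ_ne_zero _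
        have hclarge : Real.exp ((m : ℝ) * (y + 1)) ≤ (c : ℝ) := by
          calc Real.exp ((m : ℝ) * (y + 1)) ≤ (⌈Real.exp ((m : ℝ) * (y + 1))⌉₊ : ℝ) :=
                Nat.le_ceil _
            _ ≤ (c : ℝ) := by rw [hcdef]; push_cast; linarith
        have hlogc : (m : ℝ) * (y + 1) ≤ Real.log c := by
          rw [← Real.log_exp ((m : ℝ) * (y + 1))]
          exact Real.log_le_log (Real.exp_pos _) hclarge
        have hmr : (1 : ℝ) ≤ (m : ℝ) := by exact_mod_cast hm1
        have hy : y < (m : ℝ)⁻¹ * Real.log c := by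
          have h0 : (m : ℝ) * y < (m : ℝ) * (y + 1) := by nlinarith
          have : (m : ℝ) * y < Real.log c := lt_of_lt_of_le h0 hlogc
          rw [lt_inv_mul_iff₀ (by linarith)]
          linarith [this]
        have hy' : (y : EReal) <
            (((m : ℝ)⁻¹ : ℝ) : EReal) * ENNReal.log (((c : ℕ∞) : ℝ≥0∞)) := by
          rw [ENat.toENNReal_coe, log_natCast_eq c hcne, ← EReal.coe_mul]
          exact_mod_cast hy
        exact lt_of_lt_of_le hy' (claim c (htop ▸ le_top))
      rw [hRtop]
      exact le_top
    · obtain ⟨c, hc⟩ := WithTop.ne_top_iff_exists.1 htop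
      rw [← hc]
      exact claim c hc.le
  have h := tendsto_atTop_iSup hmono
  rwa [hsup] at h
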